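/- Let n = 2m+2 be even and let x : ℝ → ℝ^n be the curve with components e^{α_k t}cos(β_k t), e^{α_k t}sin(β_k t) (k=1,...,m), e^t, e^{-t}, where α_k ± β_k i are the non-real n-th roots of unity. Then the total first curvature ∫_{-∞}^{∞} k₁(t)‖x'(t)‖ dt is finite, where k₁(t) = ‖x'(t) ∧ x''(t)‖ / ‖x'(t)‖³ and ‖x'∧x''‖² = ‖x'‖²‖x''‖² − ⟨x', x''⟩². -/

import Mathlib

open Real MeasureTheory

/-! ### Scalar derivative lemmas -/

private lemma hasDerivAt_ec (a b t : ℝ) :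
    HasDerivAt (fun t => exp (a*t) * cos (b*t)) (exp (a*t) * (a * cos (b*t) - b * sin (b*t))) t := by
  have ha' : HasDerivAt (fun t : ℝ => a * t) a t := by simpa using (hasDerivAt_id t).const_mul a
  have hb' : HasDerivAt (fun t : ℝ => b * t) b t := by simpa using (hasDerivAt_id t).const_mul b
  have : HasDerivAt (fun t => exp (a*t) * cos (b*t)) _ t := ha'.exp.mul hb'.cos
  convert this using 1
  ring

private lemma hasDerivAt_es (a b t : ℝ) :
    HasDerivAt (fun t => exp (a*t) * sin (b*t)) (exp (a*t) * (a * sin (b*t) + b * cos (b*t))) t := by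
  have ha' : HasDerivAt (fun t : ℝ => a * t) a t := by simpa using (hasDerivAt_id t).const_mul a
  have hb' : HasDerivAt (fun t : ℝ => b * t) b t := by simpa using (hasDerivAt_id t).const_mul b
  have : HasDerivAt (fun t => exp (a*t) * sin (b*t)) _ t := ha'.exp.mul hb'.sin
  convert this using 1
  ring

private lemma hasDerivAt_ec' (a b t : ℝ) :
    HasDerivAt (fun t => exp (a*t) * (a * cos (b*t) - b * sin (b*t)))
      (exp (a*t) * ((a^2-b^2) * cos (b*t) - 2*a*b * sin (b*t))) t := by
  have h : HasDerivAt (fun y => a * (exp (a*y) * cos (b*y)) - b * (exp (a*y) * sin (b*y))) _ t :=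
    ((hasDerivAt_ec a b t).const_mul a).sub ((hasDerivAt_es a b t).const_mul b)
  convert h using 1
  · funext s; ring
  · ring

private lemma hasDerivAt_es' (a b t : ℝ) :
    HasDerivAt (fun t => exp (a*t) * (a * sin (b*t) + b * cos (b*t)))
      (exp (a*t) * ((a^2-b^2) * sin (b*t) + 2*a*b * cos (b*t))) t := by
  have h : HasDerivAt (fun y => a * (exp (a*y) * sin (b*y)) + b * (exp (a*y) * cos (b*y))) _ t :=
    ((hasDerivAt_es a b t).const_mul a).add ((hasDerivAt_ec a b t).const_mul b)
  convert h using 1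
  · funext s; ring
  · ring

/-! ### transfer to EuclideanSpace -/

private lemma euclidean_hasDerivAt {ι : Type*} [Fintype ι] {x : ℝ → EuclideanSpace ℝ ι}
    {U1 : ι → ℝ} {t : ℝ}
    (h : ∀ i, HasDerivAt (fun s => x s i) (U1 i) t) :
    HasDerivAt x ((EuclideanSpace.equiv ι ℝ).symm U1) t := by
  have hU : HasDerivAt (fun s => (EuclideanSpace.equiv ι ℝ) (x s)) U1 t := hasDerivAt_pi.2 h
  have := ((EuclideanSpace.equiv ι ℝ).symm.hasFDerivAt).comp_hasDerivAt t hU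
  simpa [Function.comp_def] using this

/-! ### integrable comparison function -/

private lemma integrable_exp_neg_mul_abs' {a : ℝ} (ha : 0 < a) :
    Integrable fun t : ℝ => exp (-(a * |t|)) := by
  have hIoi : IntegrableOn (fun t : ℝ => exp (-(a * |t|))) (Set.Ioi 0) := by
    apply (exp_neg_integrableOn_Ioi 0 ha).congr_fun ?_ measurableSet_Ioi
    intro s hs
    simp only [Set.mem_Ioi] at hs
    simp [abs_of_pos hs, neg_mul]
  rw [← integrableOn_univ, ← Set.Iio_union_Ici (a := (0:ℝ)), integrableOn_union,
    integrableOn_Ici_iff_integrableOn_Ioi]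
  refine ⟨?_, hIoi⟩
  rw [← (Measure.measurePreserving_neg (volume : Measure ℝ)).integrableOn_comp_preimage
      (Homeomorph.neg ℝ).measurableEmbedding]
  simpa [Function.comp_def] using hIoi

/-! ### the analytic bound -/

private lemma curvature_bound {D S P X : ℝ} (hD : 0 < D) (hS : 0 < S) (hX : 0 ≤ X)
    (h1 : S - P ≤ D * X^2 * S) (h2 : 0 ≤ S + P) (h3 : S + P ≤ 2*S) :
    Real.sqrt (S*S - P^2) / S ≤ Real.sqrt (2*D) * X := by
  rw [div_le_iff₀ hS]
  have hmul : (S - P) * (S + P) ≤ (D * X^2 * S) * (2*S) := by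
    apply mul_le_mul h1 h3 h2 (by positivity)
  calc Real.sqrt (S*S - P^2) ≤ Real.sqrt ((2*D) * (X*S)^2) := Real.sqrt_le_sqrt (by nlinarith)
    _ = Real.sqrt (2*D) * (X*S) := by
        rw [Real.sqrt_mul (by positivity), Real.sqrt_sq (by positivity)]
    _ = Real.sqrt (2*D) * X * S := by ring

private lemma even_curve_bound_aux {m : ℕ} (α : Fin m → ℝ) {c t : ℝ} (ht : 0 ≤ t)
    (hck : ∀ k, |α k| ≤ c) (hc0 : 0 ≤ c) (hc1 : c ≤ 1) :
    Real.sqrt ((((∑ k, exp (2*(α k*t))) + (exp (2*t) + exp (-(2*t)))) *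
        ((∑ k, exp (2*(α k*t))) + (exp (2*t) + exp (-(2*t))))) -
        ((∑ k, α k * exp (2*(α k*t))) + (exp (2*t) - exp (-(2*t))))^2) /
      ((∑ k, exp (2*(α k*t))) + (exp (2*t) + exp (-(2*t))))
    ≤ Real.sqrt (2*(2*m+2)) * exp (-((1-c)*t)) := by
  set S : ℝ := (∑ k, exp (2*(α k*t))) + (exp (2*t) + exp (-(2*t))) with hSdef
  set P : ℝ := (∑ k, α k * exp (2*(α k*t))) + (exp (2*t) - exp (-(2*t))) with hPdef
  have hsum_nonneg : (0:ℝ) ≤ ∑ k, exp (2*(α k*t)) :=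
    Finset.sum_nonneg fun k _ => (exp_pos _).le
  have hS_pos : 0 < S := by
    rw [hSdef]; have := exp_pos (2*t); have := exp_pos (-(2*t)); linarith
  -- S - P and S + P as sums of nonnegative terms
  have hSP : S - P = (∑ k, (1 - α k) * exp (2*(α k*t))) + 2 * exp (-(2*t)) := by
    have : ∑ k, (1 - α k) * exp (2*(α k*t)) =
        (∑ k, exp (2*(α k*t))) - ∑ k, α k * exp (2*(α k*t)) := by
      rw [← Finset.sum_sub_distrib]
      exact Finset.sum_congr rfl fun k _ => by ring
    rw [hSdef, hPdef]; linarith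
  have hSQ : S + P = (∑ k, (1 + α k) * exp (2*(α k*t))) + 2 * exp (2*t) := by
    have : ∑ k, (1 + α k) * exp (2*(α k*t)) =
        (∑ k, exp (2*(α k*t))) + ∑ k, α k * exp (2*(α k*t)) := by
      rw [← Finset.sum_add_distrib]
      exact Finset.sum_congr rfl fun k _ => by ring
    rw [hSdef, hPdef]; linarith
  have habs' : ∀ k, -c ≤ α k ∧ α k ≤ c := fun k => abs_le.1 (hck k)
  -- positivity of S ± P
  have hSPnn : 0 ≤ S - P := by
    rw [hSP]
    have : (0:ℝ) ≤ ∑ k, (1 - α k) * exp (2*(α k*t)) := by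
      apply Finset.sum_nonneg
      intro k _
      have := (habs' k).2
      have := exp_pos (2*(α k*t))
      nlinarith [hc1]
    have := exp_pos (-(2*t)); linarith
  have hSQnn : 0 ≤ S + P := by
    rw [hSQ]
    have : (0:ℝ) ≤ ∑ k, (1 + α k) * exp (2*(α k*t)) := by
      apply Finset.sum_nonneg
      intro k _
      have := (habs' k).1
      have := exp_pos (2*(α k*t))
      nlinarith [hc1]
    have := exp_pos (2*t); linarith
  -- the key decay bound
  have h5 : S - P ≤ (2*(m:ℝ)+2) * exp (2*(c*t)) := by
    have hterm : ∀ k : Fin m, (1 - α k) * exp (2*(α k*t)) ≤ 2 * exp (2*(c*t)) := by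
      intro k
      obtain ⟨hk1, hk2⟩ := habs' k
      have he : exp (2*(α k*t)) ≤ exp (2*(c*t)) := exp_le_exp.2 (by nlinarith)
      have h1 : 0 ≤ 1 - α k := by linarith
      have h2 : 1 - α k ≤ 2 := by linarith
      nlinarith [exp_pos (2*(α k*t)), exp_pos (2*(c*t))]
    have hsum : ∑ k, (1 - α k) * exp (2*(α k*t)) ≤ (m:ℝ) * (2 * exp (2*(c*t))) := by
      calc ∑ k, (1 - α k) * exp (2*(α k*t)) ≤ ∑ _k : Fin m, 2 * exp (2*(c*t)) :=
            Finset.sum_le_sum fun k _ => hterm k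
        _ = (m:ℝ) * (2 * exp (2*(c*t))) := by
            rw [Finset.sum_const, Finset.card_univ, Fintype.card_fin, nsmul_eq_mul]
    have hlast : 2 * exp (-(2*t)) ≤ 2 * exp (2*(c*t)) := by
      have : exp (-(2*t)) ≤ exp (2*(c*t)) := exp_le_exp.2 (by nlinarith)
      linarith
    rw [hSP]; linarith
  have hX2 : exp (-((1-c)*t))^2 * exp (2*t) = exp (2*(c*t)) := by
    rw [sq, ← exp_add, ← exp_add]; ring_nf
  have hS_ge : exp (2*t) ≤ S := by
    rw [hSdef]; have := exp_pos (-(2*t)); linarith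
  have h1 : S - P ≤ (2*(m:ℝ)+2) * exp (-((1-c)*t))^2 * S := by
    calc S - P ≤ (2*(m:ℝ)+2) * exp (2*(c*t)) := h5
      _ = (2*(m:ℝ)+2) * (exp (-((1-c)*t))^2 * exp (2*t)) := by rw [hX2]
      _ ≤ (2*(m:ℝ)+2) * (exp (-((1-c)*t))^2 * S) := by
          apply mul_le_mul_of_nonneg_left _ (by positivity)
          exact mul_le_mul_of_nonneg_left hS_ge (sq_nonneg _)
      _ = (2*(m:ℝ)+2) * exp (-((1-c)*t))^2 * S := by ring
  have := curvature_bound (D := 2*(m:ℝ)+2) (X := exp (-((1-c)*t)))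
    (by positivity) hS_pos (exp_pos _).le h1 hSQnn (by linarith)
  convert this using 3 <;> push_cast <;> ring

private lemma eqsymm_apply {ι : Type*} [Fintype ι] (V : ι → ℝ) (i : ι) :
    (EuclideanSpace.equiv ι ℝ).symm V i = V i := rfl

theorem even_curve_finite_total_curvature (m : ℕ) (hm : 1 ≤ m)
    (α β : Fin m → ℝ)
    (hroot : ∀ k, ((α k : ℂ) + (β k : ℂ) * Complex.I) ^ (2 * m + 2) = 1)
    (hβ : ∀ k, β k ≠ 0)
    (x : ℝ → EuclideanSpace ℝ (Fin m ⊕ Fin m ⊕ Fin 2))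
    (hx : ∀ t, x t = WithLp.toLp 2 (Sum.elim (fun k => Real.exp (α k * t) * Real.cos (β k * t))
        (Sum.elim (fun k => Real.exp (α k * t) * Real.sin (β k * t))
          (fun j => if j = 0 then Real.exp t else Real.exp (-t))))) :
    Integrable (fun t : ℝ =>
      (Real.sqrt (‖deriv x t‖ ^ 2 * ‖deriv (deriv x) t‖ ^ 2
          - (inner ℝ (deriv x t) (deriv (deriv x) t) : ℝ) ^ 2) / ‖deriv x t‖ ^ 3)
        * ‖deriv x t‖) := by
  classical
  have hm0 : 0 < m := hm
  have habs : ∀ k, α k ^ 2 + β k ^ 2 = 1 := by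
    intro k
    have h1 : Complex.normSq ((α k : ℂ) + (β k : ℂ) * Complex.I) ^ (2*m+2) = 1 := by
      rw [← map_pow, hroot k, map_one]
    have h0 : (0:ℝ) ≤ Complex.normSq ((α k : ℂ) + (β k : ℂ) * Complex.I) :=
      Complex.normSq_nonneg _
    have h2 : Complex.normSq ((α k : ℂ) + (β k : ℂ) * Complex.I) = 1 := by
      by_contra hnec
      rcases lt_or_gt_of_ne hnec with hlt|hgt
      · have := pow_lt_one₀ h0 hlt (show 2*m+2 ≠ 0 by omega); linarith
      · have := one_lt_pow₀ hgt (show 2*m+2 ≠ 0 by omega); linarith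
    simpa [Complex.normSq_add_mul_I] using h2
  have hαlt : ∀ k, |α k| < 1 := by
    intro k
    rw [← sq_lt_one_iff_abs_lt_one]
    have hb : 0 < β k ^ 2 := by
      have := hβ k; positivity
    linarith [habs k]
  have : Nonempty (Fin m) := ⟨⟨0, hm0⟩⟩
  have hne : (Finset.univ : Finset (Fin m)).Nonempty := Finset.univ_nonempty
  set c : ℝ := Finset.univ.sup' hne (fun k => |α k|) with hcdef
  have hck : ∀ k, |α k| ≤ c := fun k => by
    rw [hcdef]; exact Finset.le_sup' (fun k => |α k|) (Finset.mem_univ k)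
  have hc0 : 0 ≤ c := le_trans (abs_nonneg (α ⟨0,hm0⟩)) (hck _)
  have hc1 : c < 1 := by rw [hcdef]; exact (Finset.sup'_lt_iff hne).2 fun k _ => hαlt k
  have hc1' : c ≤ 1 := le_of_lt hc1
  -- the explicit first and second derivatives
  set u1 : ℝ → EuclideanSpace ℝ (Fin m ⊕ Fin m ⊕ Fin 2) := fun t =>
    (EuclideanSpace.equiv (Fin m ⊕ Fin m ⊕ Fin 2) ℝ).symm
      (Sum.elim (fun k => exp (α k*t) * (α k * cos (β k*t) - β k * sin (β k*t)))
        (Sum.elim (fun k => exp (α k*t) * (α k * sin (β k*t) + β k * cos (β k*t)))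
          (fun j => if j = 0 then exp t else -exp (-t)))) with hu1
  set u2 : ℝ → EuclideanSpace ℝ (Fin m ⊕ Fin m ⊕ Fin 2) := fun t =>
    (EuclideanSpace.equiv (Fin m ⊕ Fin m ⊕ Fin 2) ℝ).symm
      (Sum.elim (fun k => exp (α k*t) * ((α k^2 - β k^2) * cos (β k*t) - 2*α k*β k * sin (β k*t)))
        (Sum.elim (fun k => exp (α k*t) * ((α k^2 - β k^2) * sin (β k*t) + 2*α k*β k * cos (β k*t)))
          (fun j => if j = 0 then exp t else exp (-t)))) with hu2
  have hder1 : ∀ t, HasDerivAt x (u1 t) t := by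
    intro t
    simp only [hu1]
    apply euclidean_hasDerivAt
    rintro (k | k | j)
    · simp only [hx, Sum.elim_inl]
      exact hasDerivAt_ec (α k) (β k) t
    · simp only [hx, Sum.elim_inr, Sum.elim_inl]
      exact hasDerivAt_es (α k) (β k) t
    · fin_cases j
      · simp only [hx, Sum.elim_inr, if_pos rfl]
        exact Real.hasDerivAt_exp t
      · simp only [hx, Sum.elim_inr]
        rw [if_neg (by decide)]
        simpa using ((hasDerivAt_id t).neg).exp
  have hder2 : ∀ t, HasDerivAt u1 (u2 t) t := by
    intro t
    simp only [hu2]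
    apply euclidean_hasDerivAt
    rintro (k | k | j)
    · simp only [hu1, eqsymm_apply, Sum.elim_inl]
      exact hasDerivAt_ec' (α k) (β k) t
    · simp only [hu1, eqsymm_apply, Sum.elim_inr, Sum.elim_inl]
      exact hasDerivAt_es' (α k) (β k) t
    · fin_cases j
      · simp only [hu1, eqsymm_apply, Sum.elim_inr, if_pos rfl]
        exact Real.hasDerivAt_exp t
      · simp only [hu1, eqsymm_apply, Sum.elim_inr]
        rw [if_neg (by decide)]
        have hneg : HasDerivAt (fun s => -exp (-s)) _ t := (((hasDerivAt_id t).neg).exp).neg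
        simpa using hneg
  have hdx : deriv x = u1 := funext fun t => (hder1 t).deriv
  have hddx : deriv (deriv x) = u2 := by
    rw [hdx]; exact funext fun t => (hder2 t).deriv
  -- norm and inner product computations
  have hnorm1 : ∀ t, ‖u1 t‖^2 = (∑ k, exp (2*(α k*t))) + (exp (2*t) + exp (-(2*t))) := by
    intro t
    rw [EuclideanSpace.norm_eq, Real.sq_sqrt (by positivity)]
    simp only [hu1, eqsymm_apply, Real.norm_eq_abs, sq_abs]
    rw [Fintype.sum_sum_type, Fintype.sum_sum_type, Fin.sum_univ_two]
    simp only [Sum.elim_inl, Sum.elim_inr, if_pos rfl, eq_self_iff_true, if_true]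
    rw [if_neg (by decide : (1 : Fin 2) ≠ 0)]
    have key : ∀ k : Fin m, (exp (α k*t) * (α k * cos (β k*t) - β k * sin (β k*t)))^2
        + (exp (α k*t) * (α k * sin (β k*t) + β k * cos (β k*t)))^2 = exp (2*(α k*t)) := by
      intro k
      have h1 := sin_sq_add_cos_sq (β k*t)
      have h2 := habs k
      have h3 : exp (α k*t) * exp (α k*t) = exp (2*(α k*t)) := by
        rw [← exp_add]; congr 1; ring
      linear_combination (exp (α k*t))^2 * ((α k^2 + β k^2) * h1 + h2) + h3
    have hAB : (∑ k, (exp (α k*t) * (α k * cos (β k*t) - β k * sin (β k*t)))^2)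
        + ∑ k, (exp (α k*t) * (α k * sin (β k*t) + β k * cos (β k*t)))^2
        = ∑ k, exp (2*(α k*t)) := by
      rw [← Finset.sum_add_distrib]; exact Finset.sum_congr rfl fun k _ => key k
    have e1 : exp t ^2 = exp (2*t) := by rw [sq, ← exp_add]; congr 1; ring
    have e2 : (-exp (-t))^2 = exp (-(2*t)) := by
      rw [neg_sq, sq, ← exp_add]; congr 1; ring
    linarith
  have hnorm2 : ∀ t, ‖u2 t‖^2 = (∑ k, exp (2*(α k*t))) + (exp (2*t) + exp (-(2*t))) := by
    intro t
    rw [EuclideanSpace.norm_eq, Real.sq_sqrt (by positivity)]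
    simp only [hu2, eqsymm_apply, Real.norm_eq_abs, sq_abs]
    rw [Fintype.sum_sum_type, Fintype.sum_sum_type, Fin.sum_univ_two]
    simp only [Sum.elim_inl, Sum.elim_inr, if_pos rfl, eq_self_iff_true, if_true]
    rw [if_neg (by decide : (1 : Fin 2) ≠ 0)]
    have key : ∀ k : Fin m,
        (exp (α k*t) * ((α k^2 - β k^2) * cos (β k*t) - 2*α k*β k * sin (β k*t)))^2
        + (exp (α k*t) * ((α k^2 - β k^2) * sin (β k*t) + 2*α k*β k * cos (β k*t)))^2
        = exp (2*(α k*t)) := by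
      intro k
      have h1 := sin_sq_add_cos_sq (β k*t)
      have h2 := habs k
      have h3 : exp (α k*t) * exp (α k*t) = exp (2*(α k*t)) := by
        rw [← exp_add]; congr 1; ring
      linear_combination (exp (α k*t))^2 * (((α k^2 + β k^2)^2) * h1
        + (α k^2 + β k^2 + 1) * h2) + h3
    have hAB : (∑ k, (exp (α k*t) * ((α k^2 - β k^2) * cos (β k*t) - 2*α k*β k * sin (β k*t)))^2)
        + ∑ k, (exp (α k*t) * ((α k^2 - β k^2) * sin (β k*t) + 2*α k*β k * cos (β k*t)))^2
        = ∑ k, exp (2*(α k*t)) := by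
      rw [← Finset.sum_add_distrib]; exact Finset.sum_congr rfl fun k _ => key k
    have e1 : exp t ^2 = exp (2*t) := by rw [sq, ← exp_add]; congr 1; ring
    have e2 : exp (-t)^2 = exp (-(2*t)) := by rw [sq, ← exp_add]; congr 1; ring
    linarith
  have hinner : ∀ t, (inner ℝ (u1 t) (u2 t) : ℝ)
      = (∑ k, α k * exp (2*(α k*t))) + (exp (2*t) - exp (-(2*t))) := by
    intro t
    simp only [PiLp.inner_apply, RCLike.inner_apply', conj_trivial]
    simp only [hu1, hu2, eqsymm_apply]
    rw [Fintype.sum_sum_type, Fintype.sum_sum_type, Fin.sum_univ_two]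
    simp only [Sum.elim_inl, Sum.elim_inr, if_pos rfl, eq_self_iff_true, if_true]
    rw [if_neg (by decide : (1 : Fin 2) ≠ 0), if_neg (by decide : (1 : Fin 2) ≠ 0)]
    have key : ∀ k : Fin m,
        (exp (α k*t) * (α k * cos (β k*t) - β k * sin (β k*t)))
          * (exp (α k*t) * ((α k^2 - β k^2) * cos (β k*t) - 2*α k*β k * sin (β k*t)))
        + (exp (α k*t) * (α k * sin (β k*t) + β k * cos (β k*t)))
          * (exp (α k*t) * ((α k^2 - β k^2) * sin (β k*t) + 2*α k*β k * cos (β k*t)))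
        = α k * exp (2*(α k*t)) := by
      intro k
      have h1 := sin_sq_add_cos_sq (β k*t)
      have h2 := habs k
      have h3 : exp (α k*t) * exp (α k*t) = exp (2*(α k*t)) := by
        rw [← exp_add]; congr 1; ring
      linear_combination (α k * exp (α k*t)^2 * (α k^2 + β k^2)) * h1
        + (α k * exp (α k*t)^2) * h2 + α k * h3
    have hAB : (∑ k, (exp (α k*t) * (α k * cos (β k*t) - β k * sin (β k*t)))
          * (exp (α k*t) * ((α k^2 - β k^2) * cos (β k*t) - 2*α k*β k * sin (β k*t))))
        + ∑ k, (exp (α k*t) * (α k * sin (β k*t) + β k * cos (β k*t)))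
          * (exp (α k*t) * ((α k^2 - β k^2) * sin (β k*t) + 2*α k*β k * cos (β k*t)))
        = ∑ k, α k * exp (2*(α k*t)) := by
      rw [← Finset.sum_add_distrib]; exact Finset.sum_congr rfl fun k _ => key k
    have e1 : exp t * exp t = exp (2*t) := by rw [← exp_add]; congr 1; ring
    have e2 : -exp (-t) * exp (-t) = -exp (-(2*t)) := by
      rw [neg_mul, ← exp_add]; congr 2; ring
    linarith
  have hSpos : ∀ t : ℝ, 0 < (∑ k, exp (2*(α k*t))) + (exp (2*t) + exp (-(2*t))) := by
    intro t
    have h : (0:ℝ) ≤ ∑ k, exp (2*(α k*t)) := Finset.sum_nonneg fun k _ => (exp_pos _).le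
    have := exp_pos (2*t); have := exp_pos (-(2*t)); linarith
  have hu1ne : ∀ t, ‖u1 t‖ ≠ 0 := by
    intro t h
    have h2 := hnorm1 t
    rw [h] at h2
    simp only [ne_eq, OfNat.ofNat_ne_zero, not_false_eq_true, zero_pow] at h2
    linarith [hSpos t]
  -- rewrite the integrand
  have hgoal : (fun t : ℝ =>
      (Real.sqrt (‖deriv x t‖ ^ 2 * ‖deriv (deriv x) t‖ ^ 2
          - (inner ℝ (deriv x t) (deriv (deriv x) t) : ℝ) ^ 2) / ‖deriv x t‖ ^ 3)
        * ‖deriv x t‖)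
      = fun t : ℝ => Real.sqrt
          ((((∑ k, exp (2*(α k*t))) + (exp (2*t) + exp (-(2*t)))) *
            ((∑ k, exp (2*(α k*t))) + (exp (2*t) + exp (-(2*t))))) -
            ((∑ k, α k * exp (2*(α k*t))) + (exp (2*t) - exp (-(2*t))))^2) /
          ((∑ k, exp (2*(α k*t))) + (exp (2*t) + exp (-(2*t)))) := by
    funext t
    rw [hddx, hdx]
    rw [show (‖u1 t‖:ℝ)^3 = ‖u1 t‖^2 * ‖u1 t‖ from by ring]
    rw [hnorm1 t, hnorm2 t, hinner t]
    have hN := hu1ne t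
    have hSne := (hSpos t).ne'
    rw [div_mul_eq_mul_div, mul_div_mul_right _ _ hN]
  rw [hgoal]
  -- comparison with an integrable function
  apply Integrable.mono'
    ((integrable_exp_neg_mul_abs' (a := 1-c) (by linarith)).const_mul
      (Real.sqrt (2*(2*(m:ℝ)+2))))
  · -- measurability
    apply Continuous.aestronglyMeasurable
    have hScont : Continuous (fun t : ℝ => (∑ k, exp (2*(α k*t))) + (exp (2*t) + exp (-(2*t)))) := by
      apply Continuous.add
      · exact continuous_finset_sum _ fun k _ => by fun_prop
      · fun_prop
    have hPcont : Continuous (fun t : ℝ => (∑ k, α k * exp (2*(α k*t))) + (exp (2*t) - exp (-(2*t)))) := by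
      apply Continuous.add
      · exact continuous_finset_sum _ fun k _ => by fun_prop
      · fun_prop
    apply Continuous.div _ hScont fun t => (hSpos t).ne'
    exact Real.continuous_sqrt.comp ((hScont.mul hScont).sub (hPcont.pow 2))
  · -- the pointwise bound
    filter_upwards with t
    rw [Real.norm_eq_abs, abs_of_nonneg (by positivity)]
    rcases le_total 0 t with ht | ht
    · have hb := even_curve_bound_aux α ht hck hc0 hc1'
      rw [abs_of_nonneg ht]
      exact hb
    · have hb := even_curve_bound_aux (fun k => -(α k)) (t := -t) (by linarith)
        (fun k => by simpa using hck k) hc0 hc1'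
      rw [abs_of_nonpos ht]
      simp only [mul_neg, neg_mul, neg_neg] at hb ⊢
      rw [Finset.sum_neg_distrib] at hb
      set Se := ∑ k, exp (2*(α k*t)) with hSe
      set Sa := ∑ k, α k * exp (2*(α k*t)) with hSa
      rw [show Se + (exp (-(2*t)) + exp (2*t)) = Se + (exp (2*t) + exp (-(2*t))) from by ring,
        show (-Sa + (exp (-(2*t)) - exp (2*t)))^2 = (Sa + (exp (2*t) - exp (-(2*t))))^2 from by
          ring] at hb
      exact hb
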